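/- arXiv:1612.08280 — 2 statements merged into one kernel-verified Lean document; each statement's English description precedes it below -/
import Mathlib

section
/- Let ρ ∈ (−1,1) and u, v ∈ ℝ. Then ∫_u^∞ ∫_v^∞ x · f_ρ(x,y) dy dx = φ(u)·Φ̄((v − ρu)/√(1−ρ²)) + ρ·φ(v)·Φ̄((u − ρv)/√(1−ρ²)). -/
open MeasureTheory

/-- Density of the standard normal distribution. -/
noncomputable def stdNormalPDF (x : ℝ) : ℝ :=
  (Real.sqrt (2 * Real.pi))⁻¹ * Real.exp (-x ^ 2 / 2)

/-- Survival function of the standard normal distribution. -/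
noncomputable def stdNormalSurv (x : ℝ) : ℝ :=
  ∫ t in Set.Ioi x, stdNormalPDF t

/-- Density of the standard bivariate normal distribution with correlation `ρ`. -/
noncomputable def bvnPDF (ρ x y : ℝ) : ℝ :=
  (2 * Real.pi * Real.sqrt (1 - ρ ^ 2))⁻¹ *
    Real.exp (-(x ^ 2 - 2 * ρ * x * y + y ^ 2) / (2 * (1 - ρ ^ 2)))

open Real Set Filter Topology

lemma pdf_eq' : stdNormalPDF = fun x : ℝ =>
    (Real.sqrt (2 * Real.pi))⁻¹ * Real.exp (-(2⁻¹ : ℝ) * x ^ 2) := by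
  funext x
  simp only [stdNormalPDF]
  ring_nf

lemma pdf_cont : Continuous stdNormalPDF := by
  unfold stdNormalPDF
  fun_prop

lemma pdf_nonneg (x : ℝ) : 0 ≤ stdNormalPDF x :=
  mul_nonneg (inv_nonneg.2 (Real.sqrt_nonneg _)) (Real.exp_pos _).le

lemma pdf_integrable : Integrable stdNormalPDF := by
  rw [pdf_eq']
  exact (integrable_exp_neg_mul_sq (by norm_num : (0:ℝ) < 2⁻¹)).const_mul _

lemma pdf_integral_one : ∫ x, stdNormalPDF x = 1 := by
  simp only [pdf_eq']
  rw [MeasureTheory.integral_const_mul, integral_gaussian]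
  have h2π : (0:ℝ) < 2 * Real.pi := by positivity
  rw [show Real.pi / 2⁻¹ = 2 * Real.pi by ring]
  exact inv_mul_cancel₀ (ne_of_gt (Real.sqrt_pos.2 h2π))

lemma surv_nonneg (x : ℝ) : 0 ≤ stdNormalSurv x :=
  setIntegral_nonneg measurableSet_Ioi fun t _ => pdf_nonneg t

lemma surv_le_one (x : ℝ) : stdNormalSurv x ≤ 1 := by
  rw [← pdf_integral_one]
  exact setIntegral_le_integral pdf_integrable
    (Filter.Eventually.of_forall pdf_nonneg)

lemma surv_eq (x : ℝ) : stdNormalSurv x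
    = ((∫ t, stdNormalPDF t) - ∫ t in Iic (0:ℝ), stdNormalPDF t)
      - ∫ t in (0:ℝ)..x, stdNormalPDF t := by
  have h1 : ∀ y : ℝ, (∫ t in Iic y, stdNormalPDF t) + stdNormalSurv y
      = ∫ t, stdNormalPDF t := fun y =>
    intervalIntegral.integral_Iic_add_Ioi pdf_integrable.integrableOn pdf_integrable.integrableOn
  have h2 : (∫ t in (0:ℝ)..x, stdNormalPDF t)
      = (∫ t in Iic x, stdNormalPDF t) - ∫ t in Iic (0:ℝ), stdNormalPDF t :=
    (intervalIntegral.integral_Iic_sub_Iic pdf_integrable.integrableOn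
      pdf_integrable.integrableOn).symm
  have := h1 x
  have := h1 0
  rw [h2]
  linarith

lemma hasDerivAt_surv (x : ℝ) : HasDerivAt stdNormalSurv (-stdNormalPDF x) x := by
  have h : HasDerivAt (fun y => ∫ t in (0:ℝ)..y, stdNormalPDF t) (stdNormalPDF x) x :=
    intervalIntegral.integral_hasDerivAt_right
      pdf_integrable.intervalIntegrable
      (pdf_cont.stronglyMeasurable.stronglyMeasurableAtFilter)
      pdf_cont.continuousAt
  have h2 : HasDerivAt (fun y => ((∫ t, stdNormalPDF t) - ∫ t in Iic (0:ℝ), stdNormalPDF t)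
      - ∫ t in (0:ℝ)..y, stdNormalPDF t) (-stdNormalPDF x) x :=
    (hasDerivAt_const x _).sub h |>.congr_deriv (by ring)
  have heq : stdNormalSurv = fun y => ((∫ t, stdNormalPDF t)
      - ∫ t in Iic (0:ℝ), stdNormalPDF t) - ∫ t in (0:ℝ)..y, stdNormalPDF t :=
    funext surv_eq
  rw [heq]
  exact h2

lemma surv_cont : Continuous stdNormalSurv :=
  continuous_iff_continuousAt.2 fun x => (hasDerivAt_surv x).continuousAt

lemma hasDerivAt_pdf (x : ℝ) :
    HasDerivAt stdNormalPDF (-x * stdNormalPDF x) x := by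
  have h1 : HasDerivAt (fun x : ℝ => -x ^ 2 / 2) (-x) x := by
    have := ((hasDerivAt_pow 2 x).neg).div_const 2
    refine this.congr_deriv ?_
    simp
    ring
  have h2 := (h1.exp).const_mul (Real.sqrt (2 * Real.pi))⁻¹
  have heq : stdNormalPDF = fun x : ℝ =>
      (Real.sqrt (2 * Real.pi))⁻¹ * Real.exp (-x ^ 2 / 2) := rfl
  rw [heq]
  refine h2.congr_deriv ?_
  beta_reduce
  ring

lemma tendsto_pdf_atTop : Tendsto stdNormalPDF atTop (𝓝 0) := by
  have h1 : Tendsto (fun x : ℝ => -x ^ 2 / 2) atTop atBot := by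
    apply Filter.Tendsto.atBot_div_const (by norm_num : (0:ℝ) < 2)
    exact tendsto_neg_atTop_atBot.comp (tendsto_pow_atTop two_ne_zero)
  have h2 : Tendsto (fun x : ℝ => Real.exp (-x ^ 2 / 2)) atTop (𝓝 0) :=
    Real.tendsto_exp_atBot.comp h1
  have := h2.const_mul (Real.sqrt (2 * Real.pi))⁻¹
  simp only [mul_zero] at this
  exact this

lemma integral_Ioi_comp_sub (f : ℝ → ℝ) (a c : ℝ) :
    ∫ x in Ioi a, f (x - c) = ∫ x in Ioi (a - c), f x := by
  rw [← integral_indicator measurableSet_Ioi, ← integral_indicator measurableSet_Ioi,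
    ← integral_sub_right_eq_self ((Ioi (a - c)).indicator f) c]
  congr 1
  ext x
  simp only [Set.indicator_apply, mem_Ioi, sub_lt_sub_iff_right]

lemma integral_Ioi_pdf_affine {s : ℝ} (hs : 0 < s) (a c : ℝ) :
    ∫ x in Ioi a, s⁻¹ * stdNormalPDF ((x - c) / s) = stdNormalSurv ((a - c) / s) := by
  rw [MeasureTheory.integral_const_mul]
  have h1 : (∫ x in Ioi a, stdNormalPDF ((x - c) / s))
      = ∫ x in Ioi (a - c), stdNormalPDF (x / s) :=
    integral_Ioi_comp_sub (fun y => stdNormalPDF (y / s)) a c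
  have h2 : (∫ x in Ioi (a - c), stdNormalPDF (x * s⁻¹))
      = (s⁻¹)⁻¹ • ∫ x in Ioi ((a - c) * s⁻¹), stdNormalPDF x :=
    integral_comp_mul_right_Ioi _ _ (inv_pos.2 hs)
  simp only [div_eq_mul_inv] at h1 ⊢
  rw [h1, h2, inv_inv, smul_eq_mul, ← mul_assoc, inv_mul_cancel₀ (ne_of_gt hs), one_mul]
  rfl

lemma bvn_factor {ρ : ℝ} (hρ₁ : -1 < ρ) (hρ₂ : ρ < 1) (x y : ℝ) :
    bvnPDF ρ x y = stdNormalPDF x *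
      ((Real.sqrt (1 - ρ ^ 2))⁻¹ *
        stdNormalPDF ((y - ρ * x) / Real.sqrt (1 - ρ ^ 2))) := by
  have h0 : (0:ℝ) < 1 - ρ ^ 2 := by nlinarith
  set s := Real.sqrt (1 - ρ ^ 2) with hsdef
  have hs : 0 < s := Real.sqrt_pos.2 h0
  have hs2 : s ^ 2 = 1 - ρ ^ 2 := Real.sq_sqrt h0.le
  have h2π : Real.sqrt (2 * Real.pi) * Real.sqrt (2 * Real.pi) = 2 * Real.pi :=
    Real.mul_self_sqrt (by positivity)
  have hexp : -(x ^ 2 - 2 * ρ * x * y + y ^ 2) / (2 * (1 - ρ ^ 2))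
      = -x ^ 2 / 2 + -((y - ρ * x) / s) ^ 2 / 2 := by
    rw [div_pow, hs2]
    field_simp
    ring
  have hconst : (2 * Real.pi * s)⁻¹
      = (Real.sqrt (2 * Real.pi))⁻¹ * (s⁻¹ * (Real.sqrt (2 * Real.pi))⁻¹) := by
    have h3 : (Real.sqrt (2 * Real.pi))⁻¹ * (s⁻¹ * (Real.sqrt (2 * Real.pi))⁻¹)
        = (Real.sqrt (2 * Real.pi) * Real.sqrt (2 * Real.pi) * s)⁻¹ := by
      rw [mul_inv, mul_inv]
      ring
    rw [h3, h2π]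
  simp only [bvnPDF, stdNormalPDF]
  rw [hconst, hexp, Real.exp_add]
  ring

lemma bvn_symm (ρ x y : ℝ) : bvnPDF ρ x y = bvnPDF ρ y x := by
  simp only [bvnPDF]
  ring_nf

/-- The first truncated moment `m₁₀` identity for the standard bivariate
normal distribution with correlation `ρ ∈ (-1, 1)`. -/
theorem stmt_2 (ρ u v : ℝ) (hρ₁ : -1 < ρ) (hρ₂ : ρ < 1) :
    (∫ x in Set.Ioi u, ∫ y in Set.Ioi v, x * bvnPDF ρ x y)
      = stdNormalPDF u * stdNormalSurv ((v - ρ * u) / Real.sqrt (1 - ρ ^ 2))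
        + ρ * stdNormalPDF v * stdNormalSurv ((u - ρ * v) / Real.sqrt (1 - ρ ^ 2)) := by
  have h0 : (0:ℝ) < 1 - ρ ^ 2 := by nlinarith
  set s := Real.sqrt (1 - ρ ^ 2) with hsdef
  have hs : 0 < s := Real.sqrt_pos.2 h0
  -- inner integral
  have hinner : ∀ x : ℝ, (∫ y in Ioi v, x * bvnPDF ρ x y)
      = x * stdNormalPDF x * stdNormalSurv ((v - ρ * x) / s) := by
    intro x
    have heq : ∀ y : ℝ, x * bvnPDF ρ x y
        = (x * stdNormalPDF x) * (s⁻¹ * stdNormalPDF ((y - ρ * x) / s)) := by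
      intro y
      rw [bvn_factor hρ₁ hρ₂ x y]
      ring
    simp_rw [heq]
    rw [MeasureTheory.integral_const_mul, integral_Ioi_pdf_affine hs v (ρ * x), mul_assoc]
  rw [setIntegral_congr_fun measurableSet_Ioi (fun x _ => hinner x)]
  -- notation
  set G : ℝ → ℝ := fun x => stdNormalSurv ((v - ρ * x) / s) with hGdef
  set g2 : ℝ → ℝ := fun x =>
    (ρ / s) * (stdNormalPDF x * stdNormalPDF ((v - ρ * x) / s)) with hg2def
  -- derivative of G
  have hG : ∀ x : ℝ, HasDerivAt G ((ρ / s) * stdNormalPDF ((v - ρ * x) / s)) x := by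
    intro x
    have h1 : HasDerivAt (fun x : ℝ => (v - ρ * x) / s) (-ρ / s) x := by
      have := ((hasDerivAt_const x v).sub ((hasDerivAt_id x).const_mul ρ)).div_const s
      refine this.congr_deriv ?_
      simp
    have h2 := (hasDerivAt_surv ((v - ρ * x) / s)).comp x h1
    refine h2.congr_deriv ?_
    ring
  -- derivative of F
  have hF : ∀ x : ℝ, HasDerivAt (fun x => -(stdNormalPDF x * G x))
      (x * stdNormalPDF x * G x - g2 x) x := by
    intro x
    have := ((hasDerivAt_pdf x).mul (hG x)).neg
    refine this.congr_deriv ?_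
    simp only [hg2def, hGdef]
    ring
  -- integrability
  have hGcont : Continuous G := by
    apply surv_cont.comp
    fun_prop
  have hGbound : ∀ x : ℝ, |G x| ≤ 1 := fun x =>
    abs_le.2 ⟨by linarith [surv_nonneg ((v - ρ * x) / s)], surv_le_one _⟩
  have hxpdf : Integrable (fun x : ℝ => x * stdNormalPDF x) := by
    rw [pdf_eq']
    have := (integrable_mul_exp_neg_mul_sq (by norm_num : (0:ℝ) < 2⁻¹)).const_mul
      (Real.sqrt (2 * Real.pi))⁻¹
    apply this.congr
    filter_upwards with x
    ring
  have hint1 : IntegrableOn (fun x => x * stdNormalPDF x * G x) (Ioi u) volume := by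
    apply Integrable.mono' hxpdf.abs.integrableOn
    · exact ((continuous_id.mul pdf_cont).mul hGcont).aestronglyMeasurable
    · filter_upwards with x
      rw [Real.norm_eq_abs, abs_mul]
      calc |x * stdNormalPDF x| * |G x| ≤ |x * stdNormalPDF x| * 1 :=
            mul_le_mul_of_nonneg_left (hGbound x) (abs_nonneg _)
        _ = |x * stdNormalPDF x| := mul_one _
  have hpdfbound : ∀ t : ℝ, stdNormalPDF t ≤ (Real.sqrt (2 * Real.pi))⁻¹ := by
    intro t
    rw [stdNormalPDF]
    calc (Real.sqrt (2 * Real.pi))⁻¹ * Real.exp (-t ^ 2 / 2)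
        ≤ (Real.sqrt (2 * Real.pi))⁻¹ * 1 := by
          apply mul_le_mul_of_nonneg_left _ (by positivity)
          rw [Real.exp_le_one_iff]
          nlinarith [sq_nonneg t]
      _ = _ := mul_one _
  have hint2 : IntegrableOn g2 (Ioi u) volume := by
    apply Integrable.mono'
      ((pdf_integrable.const_mul (|ρ / s| * (Real.sqrt (2 * Real.pi))⁻¹)).integrableOn)
    · apply Continuous.aestronglyMeasurable
      simp only [hg2def]
      apply Continuous.mul continuous_const
      exact pdf_cont.mul (pdf_cont.comp (by fun_prop))
    · filter_upwards with x
      simp only [hg2def, Real.norm_eq_abs, abs_mul]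
      rw [abs_of_nonneg (pdf_nonneg x), abs_of_nonneg (pdf_nonneg _)]
      calc |ρ / s| * (stdNormalPDF x * stdNormalPDF ((v - ρ * x) / s))
          ≤ |ρ / s| * (stdNormalPDF x * (Real.sqrt (2 * Real.pi))⁻¹) := by
            apply mul_le_mul_of_nonneg_left _ (abs_nonneg _)
            exact mul_le_mul_of_nonneg_left (hpdfbound _) (pdf_nonneg x)
        _ = |ρ / s| * (Real.sqrt (2 * Real.pi))⁻¹ * stdNormalPDF x := by ring
  -- limit at infinity
  have htend : Tendsto (fun x => -(stdNormalPDF x * G x)) atTop (𝓝 0) := by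
    apply squeeze_zero_norm _ tendsto_pdf_atTop
    intro x
    rw [Real.norm_eq_abs, abs_neg, abs_mul, abs_of_nonneg (pdf_nonneg x)]
    calc stdNormalPDF x * |G x| ≤ stdNormalPDF x * 1 :=
          mul_le_mul_of_nonneg_left (hGbound x) (pdf_nonneg x)
      _ = stdNormalPDF x := mul_one _
  -- FTC on [u, ∞)
  have key : (∫ x in Ioi u, (x * stdNormalPDF x * G x - g2 x))
      = 0 - -(stdNormalPDF u * G u) :=
    integral_Ioi_of_hasDerivAt_of_tendsto' (fun x _ => hF x) (hint1.sub hint2) htend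
  rw [MeasureTheory.integral_sub hint1 hint2] at key
  -- compute ∫ g2
  have hg2eq : ∀ x : ℝ, g2 x
      = (ρ * stdNormalPDF v) * (s⁻¹ * stdNormalPDF ((x - ρ * v) / s)) := by
    intro x
    have h1 := bvn_factor hρ₁ hρ₂ x v
    have h2 := bvn_factor hρ₁ hρ₂ v x
    have hsym := bvn_symm ρ x v
    have : g2 x = ρ * (stdNormalPDF x * (s⁻¹ * stdNormalPDF ((v - ρ * x) / s))) := by
      simp only [hg2def, div_eq_mul_inv]
      ring
    rw [this, ← h1, hsym, h2]
    ring
  have hg2int : (∫ x in Ioi u, g2 x)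
      = ρ * stdNormalPDF v * stdNormalSurv ((u - ρ * v) / s) := by
    simp_rw [hg2eq]
    rw [MeasureTheory.integral_const_mul, integral_Ioi_pdf_affine hs u (ρ * v)]
  rw [hg2int] at key
  have : (∫ x in Ioi u, x * stdNormalPDF x * G x)
      = stdNormalPDF u * G u + ρ * stdNormalPDF v * stdNormalSurv ((u - ρ * v) / s) := by
    linarith
  rw [this]
end

section
/- Let (Ω, 𝔽, P) be a probability space, let A₁, A₂ ⊂ ℝ² be disjoint measurable sets with 0 < |Aᵢ| < ∞, and let D : Ω × ℝ² → ℝ be a nonnegative measurable damage function such that the random variables Uᵢ(ω) = ∫_{Aᵢ} D(ω,s) ds are square-integrable. Define L_i = Uᵢ/|Aᵢ| and L = (U₁ + U₂)/(|A₁| + |A₂|) (the normalized loss over A₁ ∪ A₂). Then Var(L) ≤ Var(L₁) + Var(L₂); i.e. the risk measure ℛ₁(·, D) = Var(L(·, D)) is spatially sub-additive. -/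
open MeasureTheory
open scoped ProbabilityTheory

lemma var_convex_aux {Ω : Type*} [MeasurableSpace Ω] (P : Measure Ω) [IsProbabilityMeasure P]
    (X Y : Ω → ℝ) (hX : MemLp X 2 P) (hY : MemLp Y 2 P) {a b : ℝ}
    (ha : 0 ≤ a) (hb : 0 ≤ b) (hab : a + b = 1) :
    ProbabilityTheory.variance (fun ω => a * X ω + b * Y ω) P
      ≤ ProbabilityTheory.variance X P + ProbabilityTheory.variance Y P := by
  have hZ : MemLp (fun ω => a * X ω + b * Y ω) 2 P := (hX.const_mul a).add (hY.const_mul b)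
  have hXi : Integrable X P := hX.integrable one_le_two
  have hYi : Integrable Y P := hY.integrable one_le_two
  have hX' : MemLp (fun ω => X ω - P[X]) 2 P := hX.sub (memLp_const _)
  have hY' : MemLp (fun ω => Y ω - P[Y]) 2 P := hY.sub (memLp_const _)
  have hEZ : P[fun ω => a * X ω + b * Y ω] = a * P[X] + b * P[Y] := by
    rw [integral_add (hXi.const_mul a) (hYi.const_mul b), integral_const_mul, integral_const_mul]
  have hVX : ProbabilityTheory.variance X P = P[fun ω => (X ω - P[X])^2] := by
    rw [ProbabilityTheory.variance_eq_integral hX.aemeasurable]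
  have hVY : ProbabilityTheory.variance Y P = P[fun ω => (Y ω - P[Y])^2] := by
    rw [ProbabilityTheory.variance_eq_integral hY.aemeasurable]
  have hVZ : ProbabilityTheory.variance (fun ω => a * X ω + b * Y ω) P
      = P[fun ω => (a * (X ω - P[X]) + b * (Y ω - P[Y]))^2] := by
    rw [ProbabilityTheory.variance_eq_integral hZ.aemeasurable]
    congr 1
    ext ω
    simp only [Pi.pow_apply, Pi.sub_apply, hEZ]
    ring
  rw [hVX, hVY, hVZ]
  have hmono : P[fun ω => (a * (X ω - P[X]) + b * (Y ω - P[Y]))^2]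
      ≤ P[fun ω => a * (X ω - P[X])^2 + b * (Y ω - P[Y])^2] := by
    apply integral_mono_of_nonneg (Filter.Eventually.of_forall fun ω => sq_nonneg _)
      ((hX'.integrable_sq.const_mul a).add (hY'.integrable_sq.const_mul b))
    refine Filter.Eventually.of_forall fun ω => ?_
    simp only [Pi.add_apply]
    nlinarith [sq_nonneg (X ω - P[X] - (Y ω - P[Y])), mul_nonneg (mul_nonneg ha hb)
      (sq_nonneg (X ω - P[X] - (Y ω - P[Y])))]
  refine hmono.trans ?_
  rw [integral_add (hX'.integrable_sq.const_mul a) (hY'.integrable_sq.const_mul b),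
    integral_const_mul, integral_const_mul]
  have h1 : 0 ≤ P[fun ω => (X ω - P[X])^2] :=
    integral_nonneg fun ω => sq_nonneg _
  have h2 : 0 ≤ P[fun ω => (Y ω - P[Y])^2] :=
    integral_nonneg fun ω => sq_nonneg _
  nlinarith


/-- Spatial sub-additivity of the variance component of the spatial risk measure:
for disjoint regions `A₁, A₂` and a nonnegative damage function `D`,
`Var(L(A₁ ∪ A₂, D)) ≤ Var(L(A₁, D)) + Var(L(A₂, D))`. -/
theorem stmt_6 {Ω : Type*} [MeasurableSpace Ω] (P : Measure Ω) [IsProbabilityMeasure P]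
    (A₁ A₂ : Set (ℝ × ℝ)) (hA₁ : MeasurableSet A₁) (hA₂ : MeasurableSet A₂)
    (hdisj : Disjoint A₁ A₂)
    (hA₁0 : 0 < volume A₁) (hA₁fin : volume A₁ < ⊤)
    (hA₂0 : 0 < volume A₂) (hA₂fin : volume A₂ < ⊤)
    (D : Ω → ℝ × ℝ → ℝ)
    (hD : Measurable fun p : Ω × (ℝ × ℝ) => D p.1 p.2)
    (hpos : ∀ ω s, 0 ≤ D ω s)
    (hU₁ : MemLp (fun ω => ∫ s in A₁, D ω s) 2 P)
    (hU₂ : MemLp (fun ω => ∫ s in A₂, D ω s) 2 P) :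
    ProbabilityTheory.variance
        (fun ω => ((volume A₁).toReal + (volume A₂).toReal)⁻¹ *
          ((∫ s in A₁, D ω s) + (∫ s in A₂, D ω s))) P
      ≤ ProbabilityTheory.variance (fun ω => (volume A₁).toReal⁻¹ * ∫ s in A₁, D ω s) P
        + ProbabilityTheory.variance (fun ω => (volume A₂).toReal⁻¹ * ∫ s in A₂, D ω s) P := by
  set a := (volume A₁).toReal with ha_def
  set b := (volume A₂).toReal with hb_def
  have ha : 0 < a := ENNReal.toReal_pos hA₁0.ne' hA₁fin.ne
  have hb : 0 < b := ENNReal.toReal_pos hA₂0.ne' hA₂fin.ne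
  have hab : 0 < a + b := by linarith
  have key := var_convex_aux P (fun ω => a⁻¹ * ∫ s in A₁, D ω s)
    (fun ω => b⁻¹ * ∫ s in A₂, D ω s) (hU₁.const_mul _) (hU₂.const_mul _)
    (a := a / (a + b)) (b := b / (a + b))
    (div_nonneg ha.le hab.le) (div_nonneg hb.le hab.le)
    (by field_simp)
  have heq : (fun ω => (a + b)⁻¹ * ((∫ s in A₁, D ω s) + (∫ s in A₂, D ω s)))
      = fun ω => a / (a + b) * (a⁻¹ * ∫ s in A₁, D ω s)
          + b / (a + b) * (b⁻¹ * ∫ s in A₂, D ω s) := by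
    funext ω
    field_simp
  rw [heq]
  exact key
end
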